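/- Let n ≥ 1, let J ∈ ℝ^{n×n}, let λ ∈ ℝ and let v ∈ ℝⁿ be a nonzero vector with Jv = λv. Form the bordered (n+1)×(n+1) block matrix B = [[J − λI, −v], [−vᵀ, 0]]. Then B is invertible if and only if λ is a simple eigenvalue of J (i.e., λ is a root of the characteristic polynomial of J of multiplicity exactly one). -/

import Mathlib

open Matrix Polynomial Module

lemma charpoly_sub_smul_one_aux {n : ℕ} (J : Matrix (Fin n) (Fin n) ℝ) (c : ℝ) :
    (J - c • 1).charpoly = J.charpoly.comp (X + C c) := by
  classical
  set φ : ℝ[X] →+* ℝ[X] := eval₂RingHom Polynomial.C (X + C c) with hφ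
  have hmap : (charmatrix J).map φ = charmatrix (J - c • 1) := by
    ext i j
    by_cases h : i = j
    · subst h
      simp [hφ, charmatrix_apply_eq, Matrix.sub_apply, Matrix.smul_apply, Matrix.one_apply,
        C_sub]
      ring
    · simp [hφ, charmatrix_apply_ne _ _ _ h, Matrix.sub_apply, Matrix.smul_apply,
        Matrix.one_apply, h]
  have : φ J.charpoly = (charmatrix (J - c • 1)).det := by
    rw [Matrix.charpoly, RingHom.map_det, RingHom.mapMatrix_apply, hmap]
  rw [Matrix.charpoly, ← this]
  simp [hφ, Polynomial.comp, coe_eval₂RingHom]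

set_option maxHeartbeats 1000000 in
/-- The bordered matrix `[[J - λI, -v], [-vᵀ, 0]]` is invertible
if and only if `λ` is a simple eigenvalue of `J` (a root of the characteristic
polynomial of multiplicity exactly one). -/
theorem bordered_matrix_invertible_iff_simple_eigenvalue
    {n : ℕ} (hn : 1 ≤ n) (J : Matrix (Fin n) (Fin n) ℝ) (lam : ℝ)
    (v : Fin n → ℝ) (hv : v ≠ 0) (heig : J.mulVec v = lam • v) :
    IsUnit (Matrix.fromBlocks (J - lam • 1)
        (Matrix.of fun i (_ : Unit) => -v i)
        (Matrix.of fun (_ : Unit) j => -v j)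
        (0 : Matrix Unit Unit ℝ)) ↔
      Polynomial.rootMultiplicity lam J.charpoly = 1 := by
  classical
  set A : Matrix (Fin n) (Fin n) ℝ := J - lam • 1 with hA
  set f : Module.End ℝ (Fin n → ℝ) := Matrix.toLin' A with hfdef
  have hfapp : ∀ x, f x = A.mulVec x := fun x => Matrix.toLin'_apply A x
  have hAv : A.mulVec v = 0 := by
    rw [hA, Matrix.sub_mulVec, heig, Matrix.smul_mulVec, Matrix.one_mulVec, sub_self]
  have hfv : f v = 0 := by rw [hfapp]; exact hAv
  set E : Submodule ℝ (Fin n → ℝ) := f.maxGenEigenspace 0 with hE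
  have hvv : v ⬝ᵥ v ≠ 0 := by
    simpa [dotProduct_self_eq_zero] using hv
  -- multiplicity = finrank E
  have hmult : Polynomial.rootMultiplicity lam J.charpoly = finrank ℝ E := by
    have h1 : f.charpoly = A.charpoly := by
      rw [← LinearMap.charpoly_toMatrix f (Pi.basisFun ℝ (Fin n)),
        LinearMap.toMatrix_eq_toMatrix', LinearMap.toMatrix'_toLin']
    rw [Polynomial.rootMultiplicity_eq_natTrailingDegree, ← charpoly_sub_smul_one_aux J lam,
      ← hA, ← h1, hE, LinearMap.finrank_maxGenEigenspace_zero_eq]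
  have hvE : v ∈ E := by
    rw [hE, Module.End.mem_maxGenEigenspace]
    exact ⟨1, by simpa using hfv⟩
  have hE1 : 1 ≤ finrank ℝ E := by
    have hle : (ℝ ∙ v) ≤ E := (Submodule.span_singleton_le_iff_mem _ _).mpr hvE
    calc 1 = finrank ℝ (ℝ ∙ v) := (finrank_span_singleton hv).symm
    _ ≤ finrank ℝ E := Submodule.finrank_mono hle
  have hB : IsUnit (Matrix.fromBlocks A
        (Matrix.of fun i (_ : Unit) => -v i)
        (Matrix.of fun (_ : Unit) j => -v j)
        (0 : Matrix Unit Unit ℝ)) ↔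
      ¬ ∃ z, z ≠ 0 ∧ (Matrix.fromBlocks A
        (Matrix.of fun i (_ : Unit) => -v i)
        (Matrix.of fun (_ : Unit) j => -v j)
        (0 : Matrix Unit Unit ℝ)).mulVec z = 0 := by
    rw [Matrix.isUnit_iff_isUnit_det, isUnit_iff_ne_zero, Ne,
      ← Matrix.exists_mulVec_eq_zero_iff]
  -- product of the bordered matrix with a block vector
  have hmul : ∀ (x : Fin n → ℝ) (t : ℝ),
      (Matrix.fromBlocks A
        (Matrix.of fun i (_ : Unit) => -v i)
        (Matrix.of fun (_ : Unit) j => -v j)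
        (0 : Matrix Unit Unit ℝ)).mulVec (Sum.elim x fun _ => t)
      = Sum.elim (A.mulVec x - t • v) (fun _ => -(v ⬝ᵥ x)) := by
    intro x t
    rw [Matrix.fromBlocks_mulVec]
    funext i
    rcases i with i | u
    · simp [Matrix.mulVec, dotProduct]
      ring
    · simp [Matrix.mulVec, dotProduct, neg_mul, Finset.sum_neg_distrib]
  -- kernel of B ↔ pair condition
  have hker : (∃ z, z ≠ 0 ∧ (Matrix.fromBlocks A
        (Matrix.of fun i (_ : Unit) => -v i)
        (Matrix.of fun (_ : Unit) j => -v j)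
        (0 : Matrix Unit Unit ℝ)).mulVec z = 0) ↔
      ∃ (x : Fin n → ℝ) (t : ℝ), (x ≠ 0 ∨ t ≠ 0) ∧ A.mulVec x = t • v ∧ v ⬝ᵥ x = 0 := by
    constructor
    · rintro ⟨z, hz0, hz⟩
      have hzz : z = Sum.elim (z ∘ Sum.inl) (fun _ => z (Sum.inr ())) := by
        funext i; rcases i with i | u
        · rfl
        · cases u; rfl
      rw [hzz, hmul] at hz
      refine ⟨z ∘ Sum.inl, z (Sum.inr ()), ?_, ?_, ?_⟩
      · by_contra h
        push_neg at h
        apply hz0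
        funext i
        rcases i with i | u
        · exact congrFun h.1 i
        · cases u; exact h.2
      · have h1 : A.mulVec (z ∘ Sum.inl) - z (Sum.inr ()) • v = 0 :=
          funext fun i => congrFun hz (Sum.inl i)
        exact sub_eq_zero.mp h1
      · have h2 := congrFun hz (Sum.inr ())
        simpa using h2
    · rintro ⟨x, t, hxt, hAx, hvx⟩
      refine ⟨Sum.elim x (fun _ => t), ?_, ?_⟩
      · intro h
        rcases hxt with h1 | h1
        · exact h1 (funext fun i => congrFun h (Sum.inl i))
        · exact h1 (congrFun h (Sum.inr ()))
      · rw [hmul]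
        funext i
        rcases i with i | u
        · simp [hAx]
        · simp [hvx]
  -- pair condition ↔ 2 ≤ finrank E
  have hpair : (∃ (x : Fin n → ℝ) (t : ℝ), (x ≠ 0 ∨ t ≠ 0) ∧ A.mulVec x = t • v ∧ v ⬝ᵥ x = 0)
      ↔ 2 ≤ finrank ℝ E := by
    constructor
    · rintro ⟨x, t, hxt, hAx, hvx⟩
      have hxE : x ∈ E := by
        rw [hE, Module.End.mem_maxGenEigenspace]
        refine ⟨2, ?_⟩
        simp only [zero_smul, sub_zero, pow_two, Module.End.mul_apply]
        rw [hfapp, hfapp, hAx, Matrix.mulVec_smul, hAv, smul_zero]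
      have hli : LinearIndependent ℝ ![v, x] := by
        rw [LinearIndependent.pair_iff]
        intro s r hsr
        by_cases ht : t = 0
        · subst ht
          have hx0 : x ≠ 0 := by tauto
          have hd : v ⬝ᵥ (s • v + r • x) = 0 := by rw [hsr]; simp
          rw [dotProduct_add, dotProduct_smul, dotProduct_smul, hvx] at hd
          have hs : s = 0 := by
            have : s * (v ⬝ᵥ v) = 0 := by simpa using hd
            exact (mul_eq_zero.mp this).resolve_right hvv
          subst hs
          simp only [zero_smul, zero_add] at hsr
          rcases smul_eq_zero.mp hsr with h | h
          · exact ⟨rfl, h⟩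
          · exact absurd h hx0
        · have happ : A.mulVec (s • v + r • x) = 0 := by rw [hsr, Matrix.mulVec_zero]
          rw [Matrix.mulVec_add, Matrix.mulVec_smul, Matrix.mulVec_smul, hAv, hAx,
            smul_zero, zero_add, smul_smul] at happ
          have hr : r = 0 := by
            rcases smul_eq_zero.mp happ with h | h
            · rcases mul_eq_zero.mp h with h' | h'
              · exact h'
              · exact absurd h' ht
            · exact absurd h hv
          subst hr
          simp only [zero_smul, add_zero] at hsr
          rcases smul_eq_zero.mp hsr with h | h
          · exact ⟨h, rfl⟩
          · exact absurd h hv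
      have hspan : Submodule.span ℝ (Set.range ![v, x]) ≤ E := by
        rw [Submodule.span_le]
        rintro y ⟨i, rfl⟩
        fin_cases i
        · simpa using hvE
        · simpa using hxE
      calc 2 = finrank ℝ (Submodule.span ℝ (Set.range ![v, x])) := by
            rw [finrank_span_eq_card hli]; simp
      _ ≤ finrank ℝ E := Submodule.finrank_mono hspan
    · intro h2
      by_cases hk : 2 ≤ finrank ℝ (LinearMap.ker f)
      · -- kernel has dimension ≥ 2 : find x ⊥ v in the kernel
        set dotp : (Fin n → ℝ) →ₗ[ℝ] ℝ :=
          { toFun := fun y => v ⬝ᵥ y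
            map_add' := fun a b => dotProduct_add v a b
            map_smul' := fun c a => by simp }
        set g : (LinearMap.ker f) →ₗ[ℝ] ℝ := dotp.comp (LinearMap.ker f).subtype with hg
        have hker_ne : LinearMap.ker g ≠ ⊥ := by
          intro hbot
          have hinj : Function.Injective g := LinearMap.ker_eq_bot.mp hbot
          have := LinearMap.finrank_le_finrank_of_injective hinj
          rw [Module.finrank_self] at this
          omega
        obtain ⟨y, hy, hy0⟩ := Submodule.exists_mem_ne_zero_of_ne_bot hker_ne
        refine ⟨(y : Fin n → ℝ), 0, Or.inl ?_, ?_, ?_⟩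
        · simpa [Submodule.coe_eq_zero] using hy0
        · rw [zero_smul, ← hfapp]
          exact y.2
        · have : g y = 0 := hy
          simpa [hg, dotp] using this
      · push_neg at hk
        have hKe : LinearMap.ker f = ℝ ∙ v := by
          have h1 : (ℝ ∙ v) ≤ LinearMap.ker f :=
            (Submodule.span_singleton_le_iff_mem _ _).mpr (LinearMap.mem_ker.mpr hfv)
          refine (Submodule.eq_of_le_of_finrank_le h1 ?_).symm
          rw [finrank_span_singleton hv]
          omega
        have hfk1 : finrank ℝ (LinearMap.ker f) = 1 := by
          rw [hKe, finrank_span_singleton hv]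
        have hne : LinearMap.ker (f ^ 2) ≠ LinearMap.ker f := by
          intro hEq
          have hsup : E ≤ LinearMap.ker f := by
            rw [hE, ← Module.End.iSup_genEigenspace_eq]
            apply iSup_le
            intro k
            rw [Module.End.genEigenspace_zero_nat]
            rcases k with _ | k
            · rw [pow_zero, Module.End.one_eq_id, LinearMap.ker_id]
              exact bot_le
            · have hc := Module.End.ker_pow_constant (f := f) (k := 1)
                (by rw [pow_one]; exact hEq.symm) k
              rw [pow_one, add_comm 1 k] at hc
              exact le_of_eq hc.symm
          have := Submodule.finrank_mono hsup
          omega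
        have hle2 : LinearMap.ker f ≤ LinearMap.ker (f ^ 2) := by
          intro x hx
          rw [LinearMap.mem_ker] at hx ⊢
          rw [pow_two, Module.End.mul_apply, hx, map_zero]
        obtain ⟨u, hu2, hu1⟩ := SetLike.exists_of_lt (lt_of_le_of_ne hle2 (Ne.symm hne))
        have hfu : f u ∈ LinearMap.ker f := by
          rw [LinearMap.mem_ker]
          have := LinearMap.mem_ker.mp hu2
          rwa [pow_two, Module.End.mul_apply] at this
        rw [hKe] at hfu
        obtain ⟨c, hc⟩ := Submodule.mem_span_singleton.mp hfu
        have hcne : c ≠ 0 := by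
          rintro rfl
          apply hu1
          rw [LinearMap.mem_ker]
          rw [zero_smul] at hc
          exact hc.symm
        refine ⟨u - ((v ⬝ᵥ u) / (v ⬝ᵥ v)) • v, c, Or.inr hcne, ?_, ?_⟩
        · rw [Matrix.mulVec_sub, Matrix.mulVec_smul, hAv, smul_zero, sub_zero, ← hfapp, ← hc]
        · rw [dotProduct_sub, dotProduct_smul]
          simp only [smul_eq_mul]
          rw [div_mul_cancel₀ _ hvv, sub_self]
  rw [hB, hker, hpair, hmult]
  omega
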